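/- arXiv:1909.06307 — 2 statements merged into one kernel-verified Lean document; each statement's English description precedes it below -/
import Mathlib

section
/- Let k ≥ 0 be an integer and W : ℝ → ℝ be integrable on [-1,1] with vanishing moments ∫_{-1}^{1} u^v W(u) du = 0 for all 0 ≤ v ≤ k. Let β : ℝ → ℝ be k-times differentiable on [t - s, t + s] with β^{(k)} Lipschitz with constant L there. Then |∫_{-1}^{1} β(t + s·u) W(u) du| ≤ (L/k!) · s^{k+1} · ∫_{-1}^{1} |u|^{k+1} |W(u)| du. -/
open Set

lemma grow_step {G G' : ℝ → ℝ} {a b t₀ C : ℝ} {m : ℕ}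
    (hG : ∀ x ∈ Icc a b, HasDerivWithinAt G (G' x) (Icc a b) x)
    (hG0 : G t₀ = 0)
    (hbd : ∀ x ∈ Icc a b, |G' x| ≤ C * |x - t₀| ^ m) :
    ∀ x ∈ Icc a b, t₀ ∈ Icc a b → |G x| ≤ C / (m + 1) * |x - t₀| ^ (m + 1) := by
  intro x hx ht
  set σ : ℝ := if t₀ ≤ x then 1 else -1 with hσ
  set r : ℝ := |x - t₀| with hr
  have hr0 : 0 ≤ r := abs_nonneg _
  have hxr : t₀ + σ * r = x := by
    by_cases h : t₀ ≤ x
    · simp [hσ, hr, h, abs_of_nonneg (sub_nonneg.2 h)]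
    · push_neg at h
      simp only [hσ, if_neg (not_le.2 h), hr, abs_of_neg (sub_neg.2 h)]
      ring
  have hmem : ∀ y ∈ Icc (0:ℝ) r, t₀ + σ * y ∈ Icc a b := by
    intro y hy
    by_cases h : t₀ ≤ x
    · simp only [hσ, if_pos h]
      constructor
      · linarith [ht.1, hy.1]
      · have : t₀ + 1 * y ≤ t₀ + r := by nlinarith [hy.2]
        calc t₀ + 1 * y ≤ t₀ + r := this
        _ = x := by rw [← hxr]; simp [hσ, h]
        _ ≤ b := hx.2
    · simp only [hσ, if_neg h]
      constructor
      · have : t₀ + (-1) * y ≥ t₀ - r := by nlinarith [hy.2]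
        calc a ≤ x := hx.1
        _ = t₀ + σ * r := hxr.symm
        _ = t₀ - r := by simp [hσ, if_neg h]; ring
        _ ≤ t₀ + (-1) * y := this
      · linarith [ht.2, hy.1]
  set H : ℝ → ℝ := fun y => G (t₀ + σ * y) with hH
  have hHd : ∀ y ∈ Ico (0:ℝ) r, HasDerivWithinAt H (G' (t₀ + σ * y) * σ) (Ici y) y := by
    intro y hy
    have h1 : HasDerivWithinAt (fun y : ℝ => t₀ + σ * y) σ (Icc 0 r) y := by
      simpa using ((hasDerivAt_id y).const_mul σ).const_add t₀ |>.hasDerivWithinAt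
    have h2 := (hG _ (hmem y ⟨hy.1, hy.2.le⟩)).comp y h1 (fun z hz => hmem z hz)
    exact h2.mono_of_mem_nhdsWithin (Icc_mem_nhdsGE_of_mem hy)
  have hHc : ContinuousOn H (Icc 0 r) := by
    intro y hy
    have h1 : HasDerivWithinAt (fun y : ℝ => t₀ + σ * y) σ (Icc 0 r) y := by
      simpa using ((hasDerivAt_id y).const_mul σ).const_add t₀ |>.hasDerivWithinAt
    exact ((hG _ (hmem y hy)).comp y h1 (fun z hz => hmem z hz)).continuousWithinAt
  have hσ1 : |σ| = 1 := by
    by_cases h : t₀ ≤ x <;> simp [hσ, h]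
  have hB : ∀ y : ℝ, HasDerivAt (fun y => C / (m + 1) * y ^ (m + 1)) (C * y ^ m) y := by
    intro y
    have := (hasDerivAt_pow (m + 1) y).const_mul (C / (m + 1))
    refine this.congr_deriv ?_
    have : ((m : ℝ) + 1) ≠ 0 := by positivity
    rw [Nat.add_sub_cancel]; push_cast
    field_simp
  have hbd' : ∀ y ∈ Ico (0:ℝ) r, ‖G' (t₀ + σ * y) * σ‖ ≤ C * y ^ m := by
    intro y hy
    have := hbd _ (hmem y ⟨hy.1, hy.2.le⟩)
    have h2 : |t₀ + σ * y - t₀| = y := by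
      rw [show t₀ + σ * y - t₀ = σ * y by ring, abs_mul, hσ1, one_mul,
        abs_of_nonneg hy.1]
    rw [Real.norm_eq_abs, abs_mul, hσ1, mul_one]
    rw [h2] at this
    exact this
  have ha : ‖H 0‖ ≤ C / (m + 1) * (0:ℝ) ^ (m + 1) := by
    simp [hH, hG0]
  have := image_norm_le_of_norm_deriv_right_le_deriv_boundary hHc hHd ha hB hbd'
    (right_mem_Icc.2 hr0)
  rw [Real.norm_eq_abs, hH] at this
  simpa [hxr] using this

lemma taylor_hasDerivAt {f : ℝ → ℝ} {a b t₀ : ℝ} (hab : a < b) (ht₀ : t₀ ∈ Icc a b)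
    (k : ℕ) (x : ℝ) :
    HasDerivAt (fun y => taylorWithinEval f (k + 1) (Icc a b) t₀ y)
      (taylorWithinEval (derivWithin f (Icc a b)) k (Icc a b) t₀ x) x := by
  have huniq := uniqueDiffOn_Icc hab
  simp_rw [taylor_within_apply]
  have hterm : ∀ i ∈ Finset.range (k + 2), HasDerivAt
      (fun y : ℝ => ((i.factorial : ℝ)⁻¹ * (y - t₀) ^ i) • iteratedDerivWithin i f (Icc a b) t₀)
      ((((i:ℝ) * (i.factorial : ℝ)⁻¹) * (x - t₀) ^ (i - 1)) • iteratedDerivWithin i f (Icc a b) t₀)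
      x := by
    intro i _
    have h1 : HasDerivAt (fun y : ℝ => (y - t₀) ^ i) ((i:ℝ) * (x - t₀) ^ (i - 1)) x := by
      simpa using ((hasDerivAt_id x).sub_const t₀).fun_pow i
    have := (h1.const_mul ((i.factorial : ℝ)⁻¹)).smul_const (iteratedDerivWithin i f (Icc a b) t₀)
    exact this.congr_deriv (by rw [smul_eq_mul, smul_eq_mul]; ring)
  have hsum := HasDerivAt.fun_sum hterm
  refine hsum.congr_deriv ?_
  symm
  conv_rhs => rw [Finset.sum_range_succ']
  simp only [Nat.cast_zero, zero_mul, zero_smul, add_zero]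
  apply Finset.sum_congr rfl
  intro i hi
  rw [← iteratedDerivWithin_succ']
  congr 1
  rw [Nat.factorial_succ, Nat.add_sub_cancel]
  push_cast
  have h1 : (i.factorial : ℝ) ≠ 0 := by positivity
  field_simp

lemma taylor_lip {L : ℝ} (hL : 0 ≤ L) :
    ∀ (k : ℕ) (f : ℝ → ℝ) {a b t₀ : ℝ}, a < b → t₀ ∈ Icc a b →
      ContDiffOn ℝ k f (Icc a b) →
      (∀ x ∈ Icc a b, |iteratedDerivWithin k f (Icc a b) x
          - iteratedDerivWithin k f (Icc a b) t₀| ≤ L * |x - t₀|) →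
      ∀ x ∈ Icc a b, |f x - taylorWithinEval f k (Icc a b) t₀ x|
        ≤ L / k.factorial * |x - t₀| ^ (k + 1) := by
  intro k
  induction k with
  | zero =>
    intro f a b t₀ hab ht hf hlip x hx
    simpa using hlip x hx
  | succ k IH =>
    intro f a b t₀ hab ht hf hlip x hx
    have huniq := uniqueDiffOn_Icc hab
    have hcast : ContDiffOn ℝ ((k : WithTop ℕ∞) + 1) f (Icc a b) := by
      exact_mod_cast hf
    have hdiff : DifferentiableOn ℝ f (Icc a b) :=
      hcast.differentiableOn (by simp)
    have hf1 : ContDiffOn ℝ k (derivWithin f (Icc a b)) (Icc a b) :=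
      ((contDiffOn_succ_iff_derivWithin huniq).mp hcast).2.2
    have hlip1 : ∀ y ∈ Icc a b,
        |iteratedDerivWithin k (derivWithin f (Icc a b)) (Icc a b) y
          - iteratedDerivWithin k (derivWithin f (Icc a b)) (Icc a b) t₀| ≤ L * |y - t₀| := by
      intro y hy
      rw [← iteratedDerivWithin_succ']
      exact hlip y hy
    have IH' := IH (derivWithin f (Icc a b)) hab ht hf1 hlip1
    have hG : ∀ y ∈ Icc a b, HasDerivWithinAt
        (fun z => f z - taylorWithinEval f (k + 1) (Icc a b) t₀ z)
        (derivWithin f (Icc a b) y - taylorWithinEval (derivWithin f (Icc a b)) k (Icc a b) t₀ y)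
        (Icc a b) y := by
      intro y hy
      exact ((hdiff y hy).hasDerivWithinAt).sub (taylor_hasDerivAt hab ht k y).hasDerivWithinAt
    have h0 : f t₀ - taylorWithinEval f (k + 1) (Icc a b) t₀ t₀ = 0 := by
      rw [taylorWithinEval_self]; ring
    have key := grow_step hG h0 IH' x hx ht
    refine key.trans ?_
    have hpow : (0:ℝ) ≤ |x - t₀| ^ (k + 1 + 1) := by positivity
    apply mul_le_mul_of_nonneg_right _ hpow
    rw [div_div]
    apply div_le_div_of_nonneg_left hL (by positivity)
    push_cast [Nat.factorial_succ]
    nlinarith [(Nat.cast_pos (α := ℝ)).mpr (Nat.factorial_pos k)]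

open MeasureTheory

theorem stmt2 (k : ℕ) (W β : ℝ → ℝ) (t s L : ℝ) (hs : 0 < s) (hL : 0 ≤ L)
    (hW : IntegrableOn W (Set.Icc (-1 : ℝ) 1))
    (hmom : ∀ v : ℕ, v ≤ k → (∫ u in (-1 : ℝ)..1, u ^ v * W u) = 0)
    (hβ : ContDiffOn ℝ k β (Set.Icc (t - s) (t + s)))
    (hLip : ∀ x ∈ Set.Icc (t - s) (t + s), ∀ y ∈ Set.Icc (t - s) (t + s),
      |iteratedDerivWithin k β (Set.Icc (t - s) (t + s)) x
        - iteratedDerivWithin k β (Set.Icc (t - s) (t + s)) y| ≤ L * |x - y|) :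
    |∫ u in (-1 : ℝ)..1, β (t + s * u) * W u|
      ≤ (L / Nat.factorial k) * s ^ (k + 1) * ∫ u in (-1 : ℝ)..1, |u| ^ (k + 1) * |W u| := by
  have hab : t - s < t + s := by linarith
  have ht : t ∈ Icc (t - s) (t + s) := by constructor <;> linarith
  have h11 : (-1 : ℝ) ≤ 1 := by norm_num
  set I := Icc (t - s) (t + s) with hI
  set T : ℝ → ℝ := fun y => taylorWithinEval β k I t y with hT
  -- Taylor remainder bound
  have hrem := taylor_lip hL k β hab ht hβ (fun x hx => hLip x hx t ht)
  -- map into I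
  have hmap : ∀ u ∈ Icc (-1 : ℝ) 1, t + s * u ∈ I := by
    intro u hu
    constructor
    · nlinarith [hu.1]
    · nlinarith [hu.2]
  have huIcc : Set.uIcc (-1 : ℝ) 1 = Icc (-1 : ℝ) 1 := uIcc_of_le h11
  -- integrabilities
  have hWi : IntervalIntegrable W volume (-1) 1 := by
    apply IntegrableOn.intervalIntegrable
    rwa [huIcc]
  have hcont_aff : ContinuousOn (fun u : ℝ => t + s * u) (Set.uIcc (-1 : ℝ) 1) :=
    (continuous_const.add (continuous_const.mul continuous_id)).continuousOn
  have hcont_β : ContinuousOn (fun u : ℝ => β (t + s * u)) (Set.uIcc (-1 : ℝ) 1) := by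
    apply hβ.continuousOn.comp hcont_aff
    intro u hu
    exact hmap u (huIcc ▸ hu)
  have hcont_T : ContinuousOn (fun u : ℝ => T (t + s * u)) (Set.uIcc (-1 : ℝ) 1) := by
    have : Continuous T := by
      simp only [hT, taylor_within_apply]
      exact continuous_finset_sum _ fun i _ =>
        (continuous_const.mul ((continuous_id.sub continuous_const).pow i)).smul continuous_const
    exact this.comp_continuousOn hcont_aff
  have hβWi : IntervalIntegrable (fun u => β (t + s * u) * W u) volume (-1) 1 :=
    hWi.continuousOn_mul hcont_β
  have hTWi : IntervalIntegrable (fun u => T (t + s * u) * W u) volume (-1) 1 :=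
    hWi.continuousOn_mul hcont_T
  have hmon : ∀ v : ℕ, IntervalIntegrable (fun u => u ^ v * W u) volume (-1) 1 := fun v =>
    hWi.continuousOn_mul ((continuous_pow v).continuousOn)
  have hWabs : IntervalIntegrable (fun u => |u| ^ (k + 1) * |W u|) volume (-1) 1 :=
    hWi.abs.continuousOn_mul ((continuous_abs.pow (k + 1)).continuousOn)
  -- Taylor part integrates to zero
  have hTzero : (∫ u in (-1 : ℝ)..1, T (t + s * u) * W u) = 0 := by
    have heq : ∀ u : ℝ, T (t + s * u) * W u
        = ∑ i ∈ Finset.range (k + 1),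
            (((i.factorial : ℝ))⁻¹ * s ^ i * iteratedDerivWithin i β I t) * (u ^ i * W u) := by
      intro u
      simp only [hT, taylor_within_apply, Finset.sum_mul]
      apply Finset.sum_congr rfl
      intro i _
      rw [smul_eq_mul, show t + s * u - t = s * u by ring, mul_pow]
      ring
    simp_rw [heq]
    rw [intervalIntegral.integral_finset_sum]
    · apply Finset.sum_eq_zero
      intro i hi
      rw [intervalIntegral.integral_const_mul, hmom i (Nat.lt_succ_iff.mp (Finset.mem_range.mp hi)),
        mul_zero]
    · intro i _
      exact (hmon i).const_mul _
  -- reduce to remainder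
  have hsplit : (∫ u in (-1 : ℝ)..1, β (t + s * u) * W u)
      = ∫ u in (-1 : ℝ)..1, (β (t + s * u) - T (t + s * u)) * W u := by
    rw [show (fun u => (β (t + s * u) - T (t + s * u)) * W u)
        = fun u => β (t + s * u) * W u - T (t + s * u) * W u by funext u; ring]
    rw [intervalIntegral.integral_sub hβWi hTWi, hTzero, sub_zero]
  rw [hsplit]
  have hRWi : IntervalIntegrable (fun u => (β (t + s * u) - T (t + s * u)) * W u) volume (-1) 1 :=
    hWi.continuousOn_mul (hcont_β.sub hcont_T)
  calc |∫ u in (-1 : ℝ)..1, (β (t + s * u) - T (t + s * u)) * W u|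
      ≤ ∫ u in (-1 : ℝ)..1, |(β (t + s * u) - T (t + s * u)) * W u| :=
        intervalIntegral.abs_integral_le_integral_abs h11
    _ ≤ ∫ u in (-1 : ℝ)..1, (L / Nat.factorial k * s ^ (k + 1)) * (|u| ^ (k + 1) * |W u|) := by
        apply intervalIntegral.integral_mono_on h11 hRWi.abs (hWabs.const_mul _)
        intro u hu
        rw [abs_mul]
        have h1 := hrem (t + s * u) (hmap u hu)
        have h2 : |t + s * u - t| = s * |u| := by
          rw [show t + s * u - t = s * u by ring, abs_mul, abs_of_pos hs]
        rw [h2] at h1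
        calc |β (t + s * u) - T (t + s * u)| * |W u|
            ≤ (L / Nat.factorial k * (s * |u|) ^ (k + 1)) * |W u| := by
              apply mul_le_mul_of_nonneg_right h1 (abs_nonneg _)
          _ = L / Nat.factorial k * s ^ (k + 1) * (|u| ^ (k + 1) * |W u|) := by
              rw [mul_pow]; ring
    _ = (L / Nat.factorial k) * s ^ (k + 1) * ∫ u in (-1 : ℝ)..1, |u| ^ (k + 1) * |W u| := by
        rw [intervalIntegral.integral_const_mul]
end

section
/- Let f ∈ L²([0,1]) satisfy ∫₀¹ f(x) dx = 1, ∫₀¹ x f(x) dx = 0, and ∫₀¹ x³ f(x) dx = 0. Then ∫₀¹ f(x)² dx ≥ 64/9. -/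
open MeasureTheory

theorem stmt7 (f : ℝ → ℝ)
    (hf : MemLp f 2 (volume.restrict (Set.Icc (0 : ℝ) 1)))
    (h0 : (∫ x in (0 : ℝ)..1, f x) = 1)
    (h1 : (∫ x in (0 : ℝ)..1, x * f x) = 0)
    (h3 : (∫ x in (0 : ℝ)..1, x ^ 3 * f x) = 0) :
    64 / 9 ≤ ∫ x in (0 : ℝ)..1, (f x) ^ 2 := by
  set μ := volume.restrict (Set.Ioc (0 : ℝ) 1) with hμ
  set p : ℝ → ℝ := fun x => 64/9 - 20*x + 140/9*x^3 with hp
  have hpc : Continuous p := by fun_prop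
  have hfμ : MemLp f 2 μ :=
    hf.mono_measure (Measure.restrict_mono Set.Ioc_subset_Icc_self le_rfl)
  have hfi : Integrable f μ := hfμ.integrable one_le_two
  have hfsq : Integrable (fun x => f x ^ 2) μ := hfμ.integrable_sq
  have hmem : ∀ᵐ x ∂μ, x ∈ Set.Ioc (0:ℝ) 1 := ae_restrict_mem measurableSet_Ioc
  have hxb : ∀ᵐ x ∂μ, ‖x‖ ≤ 1 := by
    filter_upwards [hmem] with x hx
    rw [Real.norm_eq_abs, abs_le]; constructor <;> [linarith [hx.1]; exact hx.2]
  have hx3b : ∀ᵐ x ∂μ, ‖x ^ 3‖ ≤ 1 := by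
    filter_upwards [hmem] with x hx
    rw [Real.norm_eq_abs, abs_of_nonneg (pow_nonneg hx.1.le 3)]
    exact pow_le_one₀ hx.1.le hx.2
  have hpb : ∀ᵐ x ∂μ, ‖p x‖ ≤ 100 := by
    filter_upwards [hmem] with x hx
    have h1' : (0:ℝ) ≤ x ^ 3 := pow_nonneg hx.1.le 3
    have h2' : x ^ 3 ≤ 1 := pow_le_one₀ hx.1.le hx.2
    rw [Real.norm_eq_abs, abs_le]
    constructor
    · simp only [hp]; linarith [hx.1.le, hx.2]
    · simp only [hp]; linarith [hx.1.le, hx.2]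
  have i1 : Integrable (fun x => x * f x) μ :=
    hfi.bdd_mul (c := 1) (continuous_id.aestronglyMeasurable) hxb
  have i3 : Integrable (fun x => x ^ 3 * f x) μ :=
    hfi.bdd_mul (c := 1) ((continuous_pow 3).aestronglyMeasurable) hx3b
  have ipf : Integrable (fun x => p x * f x) μ :=
    hfi.bdd_mul (c := 100) hpc.aestronglyMeasurable hpb
  have ipsq : Integrable (fun x => p x ^ 2) μ := by
    rw [hμ]
    exact (hpc.pow 2).integrableOn_Ioc
  -- translate interval integrals
  have e0 : (∫ x, f x ∂μ) = 1 := by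
    rw [← h0, intervalIntegral.integral_of_le (by norm_num : (0:ℝ) ≤ 1)]
  have e1 : (∫ x, x * f x ∂μ) = 0 := by
    rw [← h1, intervalIntegral.integral_of_le (by norm_num : (0:ℝ) ≤ 1)]
  have e3 : (∫ x, x ^ 3 * f x ∂μ) = 0 := by
    rw [← h3, intervalIntegral.integral_of_le (by norm_num : (0:ℝ) ≤ 1)]
  have key1 : (∫ x, p x * f x ∂μ) = 64/9 := by
    have h : (∫ x, p x * f x ∂μ)
        = ∫ x, ((64/9) * f x - 20 * (x * f x) + (140/9) * (x ^ 3 * f x)) ∂μ := by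
      congr 1; funext x; simp only [hp]; ring
    have ja : Integrable (fun x => (64/9 : ℝ) * f x - 20 * (x * f x)) μ :=
      (hfi.const_mul _).sub (i1.const_mul _)
    have jb : Integrable (fun x => (140/9 : ℝ) * (x ^ 3 * f x)) μ := i3.const_mul _
    rw [h, integral_add ja jb,
      integral_sub (hfi.const_mul _) (i1.const_mul _),
      MeasureTheory.integral_const_mul, MeasureTheory.integral_const_mul, MeasureTheory.integral_const_mul, e0, e1, e3]
    norm_num
  have ipow : ∀ n : ℕ, IntervalIntegrable (fun x : ℝ => x ^ n) volume 0 1 :=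
    fun n => (continuous_pow n).intervalIntegrable _ _
  have key2 : (∫ x, p x ^ 2 ∂μ) = 64/9 := by
    have h : (∫ x, p x ^ 2 ∂μ) = ∫ x in (0:ℝ)..1, p x ^ 2 := by
      rw [intervalIntegral.integral_of_le (by norm_num : (0:ℝ) ≤ 1)]
    rw [h]
    have h2 : (fun x : ℝ => p x ^ 2) = fun x =>
        (4096/81 : ℝ) + (-2560/9) * x ^ 1 + 400 * x ^ 2 + (17920/81) * x ^ 3
          + (-5600/9) * x ^ 4 + (19600/81) * x ^ 6 := by
      funext x; simp only [hp]; ring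
    rw [h2]
    have ii : ∀ c : ℝ, ∀ n : ℕ,
        IntervalIntegrable (fun x : ℝ => c * x ^ n) volume 0 1 :=
      fun c n => (ipow n).const_mul c
    rw [intervalIntegral.integral_add (((((intervalIntegrable_const).add (ii _ 1)).add
          (ii _ 2)).add (ii _ 3)).add (ii _ 4)) (ii _ 6),
      intervalIntegral.integral_add ((((intervalIntegrable_const).add (ii _ 1)).add
          (ii _ 2)).add (ii _ 3)) (ii _ 4),
      intervalIntegral.integral_add (((intervalIntegrable_const).add (ii _ 1)).add
          (ii _ 2)) (ii _ 3),
      intervalIntegral.integral_add ((intervalIntegrable_const).add (ii _ 1)) (ii _ 2),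
      intervalIntegral.integral_add (intervalIntegrable_const) (ii _ 1)]
    simp only [intervalIntegral.integral_const_mul, integral_pow,
      intervalIntegral.integral_const]
    norm_num
  have hnonneg : 0 ≤ ∫ x, (f x - p x) ^ 2 ∂μ :=
    integral_nonneg fun x => sq_nonneg _
  have expand : (∫ x, (f x - p x) ^ 2 ∂μ)
      = (∫ x, f x ^ 2 ∂μ) - 2 * (64/9) + 64/9 := by
    have h : (∫ x, (f x - p x) ^ 2 ∂μ)
        = ∫ x, (f x ^ 2 - 2 * (p x * f x) + p x ^ 2) ∂μ := by
      congr 1; funext x; ring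
    have ja : Integrable (fun x => f x ^ 2 - 2 * (p x * f x)) μ :=
      hfsq.sub (ipf.const_mul 2)
    rw [h, integral_add ja ipsq,
      integral_sub hfsq (ipf.const_mul 2), MeasureTheory.integral_const_mul, key1, key2]
  have hgoal : (∫ x in (0:ℝ)..1, f x ^ 2) = ∫ x, f x ^ 2 ∂μ := by
    rw [intervalIntegral.integral_of_le (by norm_num : (0:ℝ) ≤ 1)]
  rw [hgoal]
  linarith [hnonneg, expand]
end
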